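/- arXiv:2602.10097 — 2 statements merged into one kernel-verified Lean document; each statement's English description precedes it below -/
import Mathlib

section
/- With h 2-wise independent, s 4-wise independent, and CS the associated CountSketch into ℝ^m, for any x, y ∈ ℝ^d: Var(⟨CS(x), CS(y)⟩) = (1/m)(Σ_{i≠j} x_i² y_j² + Σ_{i≠j} x_i y_i x_j y_j) ≤ (2/m) ‖x‖₂² ‖y‖₂². -/
open MeasureTheory ProbabilityTheory Finset
open scoped ENNReal

set_option linter.unusedSectionVars false
set_option maxHeartbeats 1000000


lemma aux_sign_prod {Ω : Type*} [MeasurableSpace Ω] (μ : Measure Ω) [IsProbabilityMeasure μ]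
    {d : ℕ} (s : Ω → Fin d → ℝ) (hms : Measurable s)
    (hsign : ∀ ω i, s ω i = 1 ∨ s ω i = -1)
    (h4wise : ∀ I : Finset (Fin d), I.card ≤ 4 → ∀ ε : Fin d → ℝ,
      (∀ i ∈ I, ε i = 1 ∨ ε i = -1) →
      μ {ω | ∀ i ∈ I, s ω i = ε i} = (1 / 2 : ℝ≥0∞) ^ I.card)
    (J : Finset (Fin d)) (hne : J.Nonempty) (hJ : J.card ≤ 4) :
    ∫ ω, ∏ j ∈ J, s ω j ∂μ = 0 := by
  classical
  have hmsi : ∀ i, Measurable fun ω => s ω i := fun i => (measurable_pi_apply i).comp hms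
  set E : Finset (Fin d) → Set Ω :=
    fun K => {ω | ∀ j ∈ J, s ω j = if j ∈ K then (-1:ℝ) else 1} with hE
  have hEmeas : ∀ K, MeasurableSet (E K) := by
    intro K
    have : E K = ⋂ j ∈ J, (fun ω => s ω j) ⁻¹' {if j ∈ K then (-1:ℝ) else 1} := by
      ext ω; simp [hE]
    rw [this]
    exact MeasurableSet.biInter J.countable_toSet fun j _ =>
      (hmsi j) (measurableSet_singleton _)
  have key : ∀ ω, (∏ j ∈ J, s ω j)
      = ∑ K ∈ J.powerset, ((-1:ℝ) ^ K.card) * (E K).indicator (fun _ => (1:ℝ)) ω := by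
    intro ω
    set K₀ : Finset (Fin d) := J.filter (fun j => s ω j = -1) with hK0
    rw [Finset.sum_eq_single K₀]
    · have hmem : ω ∈ E K₀ := by
        intro j hj
        by_cases hsj : s ω j = -1
        · have hjK : j ∈ K₀ := Finset.mem_filter.mpr ⟨hj, hsj⟩
          rw [if_pos hjK]; exact hsj
        · have hjK : j ∉ K₀ := by simp [hK0, Finset.mem_filter, hsj]
          rcases hsign ω j with h1 | h1
          · rw [if_neg hjK]; exact h1
          · exact absurd h1 hsj
      rw [Set.indicator_of_mem hmem, mul_one]
      have hcongr : ∀ j ∈ J, s ω j = if j ∈ K₀ then (-1:ℝ) else 1 := hmem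
      rw [Finset.prod_congr rfl hcongr, Finset.prod_ite, Finset.prod_const,
        Finset.prod_const, one_pow, mul_one]
      congr 2
      ext j
      simp [Finset.mem_filter, hK0, and_comm]
    · intro K hK hKne
      by_cases hωE : ω ∈ E K
      · exfalso
        apply hKne
        have hKsub : K ⊆ J := Finset.mem_powerset.mp hK
        ext j
        constructor
        · intro hjK
          have hjJ := hKsub hjK
          have := hωE j hjJ
          rw [if_pos hjK] at this
          exact Finset.mem_filter.mpr ⟨hjJ, this⟩
        · intro hjK0
          obtain ⟨hjJ, hs⟩ := Finset.mem_filter.mp hjK0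
          have := hωE j hjJ
          by_contra hjK
          rw [if_neg hjK] at this
          rw [this] at hs
          norm_num at hs
      · rw [Set.indicator_of_notMem hωE, mul_zero]
    · intro hK0
      exact absurd (Finset.mem_powerset.mpr (Finset.filter_subset _ _)) hK0
  have hμE : ∀ K ∈ J.powerset, μ (E K) = (1/2 : ℝ≥0∞) ^ J.card := fun K _ =>
    h4wise J hJ _ (fun j hj => by by_cases hjK : j ∈ K <;> simp [hjK])
  calc ∫ ω, ∏ j ∈ J, s ω j ∂μ
      = ∫ ω, ∑ K ∈ J.powerset, ((-1:ℝ)^K.card) * (E K).indicator (fun _ => (1:ℝ)) ω ∂μ :=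
        integral_congr_ae (ae_of_all _ key)
    _ = ∑ K ∈ J.powerset, ∫ ω, ((-1:ℝ)^K.card) * (E K).indicator (fun _ => (1:ℝ)) ω ∂μ :=
        integral_finset_sum _ fun K _ =>
          ((integrable_const (1:ℝ)).indicator (hEmeas K)).const_mul _
    _ = ∑ K ∈ J.powerset, ((-1:ℝ)^K.card) * ((1/2:ℝ)^J.card) := by
        refine Finset.sum_congr rfl fun K hK => ?_
        rw [integral_const_mul, integral_indicator_const (1:ℝ) (hEmeas K), measureReal_def, hμE K hK]
        norm_num [ENNReal.toReal_pow]
    _ = 0 := by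
        rw [← Finset.sum_mul]
        have h0 := Finset.sum_powerset_neg_one_pow_card_of_nonempty (h0 := hne)
        have h1 : (∑ K ∈ J.powerset, (-1:ℝ)^K.card) = 0 := by
          exact_mod_cast congrArg (fun z : ℤ => (z : ℝ)) h0
        rw [h1, zero_mul]

section Aux

variable {Ω : Type*} [MeasurableSpace Ω] (μ : Measure Ω) [IsProbabilityMeasure μ]
variable {d m : ℕ} (h : Ω → Fin d → Fin m) (s : Ω → Fin d → ℝ) (x y : Fin d → ℝ)

/-- The elementary term in the CountSketch expansion. -/
noncomputable def auxT (i k : Fin d) (ω : Ω) : ℝ :=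
  if h ω i = h ω k then s ω i * s ω k * (x i * y k) else 0

/-- The centered part of the CountSketch inner product. -/
noncomputable def auxW (ω : Ω) : ℝ :=
  ∑ i : Fin d, ∑ k ∈ Finset.univ.erase i, auxT h s x y i k ω

lemma aux_sum_ite_mul (a b : Fin m) (u v : ℝ) :
    ∑ j : Fin m, (if a = j then u else 0) * (if b = j then v else 0)
      = if a = b then u * v else 0 := by
  rw [Finset.sum_eq_single a]
  · simp [eq_comm]
  · intro j _ hj
    rw [if_neg (fun hh => hj hh.symm), zero_mul]
  · simp

lemma aux_Z_eq (hss : ∀ ω i, s ω i * s ω i = 1) (ω : Ω) :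
    (∑ j : Fin m,
        (∑ i ∈ Finset.univ.filter fun i => h ω i = j, s ω i * x i) *
        (∑ i ∈ Finset.univ.filter fun i => h ω i = j, s ω i * y i))
      = (∑ i : Fin d, x i * y i) + auxW h s x y ω := by
  classical
  have step1 : ∀ j : Fin m,
      (∑ i ∈ Finset.univ.filter fun i => h ω i = j, s ω i * x i) *
      (∑ i ∈ Finset.univ.filter fun i => h ω i = j, s ω i * y i)
      = ∑ i : Fin d, ∑ k : Fin d,
          (if h ω i = j then s ω i * x i else 0) * (if h ω k = j then s ω k * y k else 0) := by
    intro j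
    rw [Finset.sum_filter, Finset.sum_filter, Finset.sum_mul_sum]
  calc (∑ j : Fin m,
        (∑ i ∈ Finset.univ.filter fun i => h ω i = j, s ω i * x i) *
        (∑ i ∈ Finset.univ.filter fun i => h ω i = j, s ω i * y i))
      = ∑ j : Fin m, ∑ i : Fin d, ∑ k : Fin d,
          (if h ω i = j then s ω i * x i else 0) * (if h ω k = j then s ω k * y k else 0) :=
        Finset.sum_congr rfl fun j _ => step1 j
    _ = ∑ i : Fin d, ∑ k : Fin d, ∑ j : Fin m,
          (if h ω i = j then s ω i * x i else 0) * (if h ω k = j then s ω k * y k else 0) := by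
        rw [Finset.sum_comm]
        exact Finset.sum_congr rfl fun i _ => Finset.sum_comm
    _ = ∑ i : Fin d, ∑ k : Fin d,
          (if h ω i = h ω k then (s ω i * x i) * (s ω k * y k) else 0) :=
        Finset.sum_congr rfl fun i _ => Finset.sum_congr rfl fun k _ =>
          aux_sum_ite_mul (h ω i) (h ω k) _ _
    _ = ∑ i : Fin d, (x i * y i + ∑ k ∈ Finset.univ.erase i, auxT h s x y i k ω) := by
        refine Finset.sum_congr rfl fun i _ => ?_
        rw [← Finset.add_sum_erase _ _ (Finset.mem_univ i)]
        congr 1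
        · rw [if_pos rfl]
          linear_combination (x i * y i) * hss ω i
        · refine Finset.sum_congr rfl fun k _ => ?_
          unfold auxT
          by_cases hc : h ω i = h ω k
          · rw [if_pos hc, if_pos hc]; ring
          · rw [if_neg hc, if_neg hc]
    _ = (∑ i : Fin d, x i * y i) + auxW h s x y ω := by
        rw [Finset.sum_add_distrib]; rfl

end Aux

section Aux3

variable {Ω : Type*} [MeasurableSpace Ω] (μ : Measure Ω) [IsProbabilityMeasure μ]
variable {d m : ℕ} (h : Ω → Fin d → Fin m) (s : Ω → Fin d → ℝ) (x y : Fin d → ℝ)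

/-- integrability from boundedness -/
lemma aux_int_of_bdd {f : Ω → ℝ} {C : ℝ} (hf : Measurable f) (hb : ∀ ω, |f ω| ≤ C) :
    Integrable f μ :=
  memLp_one_iff_integrable.mp <| MemLp.of_bound hf.aestronglyMeasurable C
    (ae_of_all _ (by simpa [Real.norm_eq_abs] using hb))

lemma aux_meas_E (hmh : Measurable h) (i k : Fin d) :
    MeasurableSet {ω | h ω i = h ω k} :=
  measurableSet_eq_fun ((measurable_pi_apply i).comp hmh)
    ((measurable_pi_apply k).comp hmh)

lemma aux_ind_int (hmh : Measurable h) (i k : Fin d) :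
    ∫ ω, (if h ω i = h ω k then (1:ℝ) else 0) ∂μ = (μ {ω | h ω i = h ω k}).toReal := by
  classical
  have e : (fun ω => if h ω i = h ω k then (1:ℝ) else 0)
      = Set.indicator {ω | h ω i = h ω k} (fun _ => (1:ℝ)) := by
    funext ω
    by_cases hc : h ω i = h ω k <;> simp [Set.indicator_apply, hc]
  rw [e, integral_indicator_const (1:ℝ) (aux_meas_E h hmh i k)]
  simp [measureReal_def]

lemma aux_col (ω₀ : Ω) (h2wise : ∀ i j : Fin d, i ≠ j → ∀ a b : Fin m,
      μ {ω | h ω i = a ∧ h ω j = b} = 1 / (m : ℝ≥0∞) ^ 2)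
    (hmh : Measurable h) (i k : Fin d) (hik : i ≠ k) :
    (μ {ω | h ω i = h ω k}).toReal = 1 / m := by
  classical
  have hm : m ≠ 0 := by
    intro hm
    subst hm
    exact (h ω₀ i).elim0
  have hdecomp : {ω | h ω i = h ω k} = ⋃ a : Fin m, ({ω | h ω i = a} ∩ {ω | h ω k = a}) := by
    ext ω
    simp only [Set.mem_setOf_eq, Set.mem_iUnion, Set.mem_inter_iff]
    exact ⟨fun he => ⟨h ω k, he, rfl⟩, fun ⟨a, h1, h2⟩ => h1.trans h2.symm⟩
  have hdisj : Pairwise (Function.onFun Disjoint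
      fun a : Fin m => ({ω | h ω i = a} ∩ {ω | h ω k = a})) := by
    intro a b hab
    rw [Function.onFun, Set.disjoint_left]
    rintro ω ⟨h1, _⟩ ⟨h3, _⟩
    exact hab (h1.symm.trans h3)
  have hmeas : ∀ a : Fin m, MeasurableSet ({ω | h ω i = a} ∩ {ω | h ω k = a}) := by
    intro a
    exact (((measurable_pi_apply i).comp hmh) (measurableSet_singleton a)).inter
      (((measurable_pi_apply k).comp hmh) (measurableSet_singleton a))
  rw [hdecomp, measure_iUnion hdisj hmeas]
  have hval : ∀ a : Fin m, μ ({ω | h ω i = a} ∩ {ω | h ω k = a}) = 1 / (m : ℝ≥0∞) ^ 2 := by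
    intro a
    have : {ω | h ω i = a} ∩ {ω | h ω k = a} = {ω | h ω i = a ∧ h ω k = a} := rfl
    rw [this]
    exact h2wise i k hik a a
  rw [tsum_congr hval, tsum_fintype]
  rw [Finset.sum_const, Finset.card_univ, Fintype.card_fin, nsmul_eq_mul]
  rw [ENNReal.toReal_mul, ENNReal.toReal_div, ENNReal.toReal_pow]
  simp only [ENNReal.toReal_natCast, ENNReal.toReal_one]
  have hmr : (m:ℝ) ≠ 0 := Nat.cast_ne_zero.mpr hm
  field_simp

end Aux3

section Aux4

variable {Ω : Type*} [MeasurableSpace Ω] (μ : Measure Ω) [IsProbabilityMeasure μ]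
variable {d m : ℕ} (h : Ω → Fin d → Fin m) (s : Ω → Fin d → ℝ) (x y : Fin d → ℝ)

lemma aux_pair (hms : Measurable s) (hsign : ∀ ω i, s ω i = 1 ∨ s ω i = -1)
    (h4wise : ∀ I : Finset (Fin d), I.card ≤ 4 → ∀ ε : Fin d → ℝ,
      (∀ i ∈ I, ε i = 1 ∨ ε i = -1) →
      μ {ω | ∀ i ∈ I, s ω i = ε i} = (1 / 2 : ℝ≥0∞) ^ I.card)
    (a b : Fin d) (hab : a ≠ b) : ∫ ω, s ω a * s ω b ∂μ = 0 := by
  classical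
  have hcard : ({a, b} : Finset (Fin d)).card ≤ 4 := by
    refine le_trans (Finset.card_insert_le _ _) ?_
    simp
  have h0 := aux_sign_prod μ s hms hsign h4wise {a, b} ⟨a, by simp⟩ hcard
  have e : (fun ω => ∏ j ∈ ({a, b} : Finset (Fin d)), s ω j)
      = fun ω => s ω a * s ω b := funext fun ω => Finset.prod_pair hab
  rwa [e] at h0

lemma aux_s4 (hms : Measurable s) (hsign : ∀ ω i, s ω i = 1 ∨ s ω i = -1)
    (h4wise : ∀ I : Finset (Fin d), I.card ≤ 4 → ∀ ε : Fin d → ℝ,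
      (∀ i ∈ I, ε i = 1 ∨ ε i = -1) →
      μ {ω | ∀ i ∈ I, s ω i = ε i} = (1 / 2 : ℝ≥0∞) ^ I.card)
    (i k i' k' : Fin d) (hik : i ≠ k) (hik' : i' ≠ k')
    (hA : ¬((i' = i ∧ k' = k) ∨ (i' = k ∧ k' = i))) :
    ∫ ω, s ω i * s ω k * (s ω i' * s ω k') ∂μ = 0 := by
  classical
  have hss : ∀ ω j, s ω j * s ω j = 1 := fun ω j => by
    rcases hsign ω j with h1 | h1 <;> rw [h1] <;> norm_num
  by_cases e1 : i' = i
  · subst e1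
    have hkk' : k' ≠ k := fun e => hA (Or.inl ⟨rfl, e⟩)
    have e : (fun ω => s ω i' * s ω k * (s ω i' * s ω k'))
        = fun ω => s ω k * s ω k' := funext fun ω => by
      linear_combination (s ω k * s ω k') * hss ω i'
    rw [e]
    exact aux_pair μ s hms hsign h4wise k k' (fun e => hkk' e.symm)
  · by_cases e2 : k' = i
    · subst e2
      have hki' : k ≠ i' := fun e => hA (Or.inr ⟨e.symm, rfl⟩)
      have e : (fun ω => s ω k' * s ω k * (s ω i' * s ω k'))
          = fun ω => s ω k * s ω i' := funext fun ω => by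
        linear_combination (s ω k * s ω i') * hss ω k'
      rw [e]
      exact aux_pair μ s hms hsign h4wise k i' hki'
    · by_cases e3 : i' = k
      · subst e3
        have hikk : i ≠ k' := fun e => e2 e.symm
        have e : (fun ω => s ω i * s ω i' * (s ω i' * s ω k'))
            = fun ω => s ω i * s ω k' := funext fun ω => by
          linear_combination (s ω i * s ω k') * hss ω i'
        rw [e]
        exact aux_pair μ s hms hsign h4wise i k' hikk
      · by_cases e4 : k' = k
        · subst e4
          have hii' : i ≠ i' := fun e => e1 e.symm
          have e : (fun ω => s ω i * s ω k' * (s ω i' * s ω k'))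
              = fun ω => s ω i * s ω i' := funext fun ω => by
            linear_combination (s ω i * s ω i') * hss ω k'
          rw [e]
          exact aux_pair μ s hms hsign h4wise i i' hii'
        · -- all four distinct
          have h1 : i ∉ ({k, i', k'} : Finset (Fin d)) := by
            simp only [Finset.mem_insert, Finset.mem_singleton]
            push_neg
            exact ⟨hik, fun e => e1 e.symm, fun e => e2 e.symm⟩
          have h2 : k ∉ ({i', k'} : Finset (Fin d)) := by
            simp only [Finset.mem_insert, Finset.mem_singleton]
            push_neg
            exact ⟨fun e => e3 e.symm, fun e => e4 e.symm⟩
          have h3 : i' ∉ ({k'} : Finset (Fin d)) := by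
            simpa using hik'
          have hcard : ({i, k, i', k'} : Finset (Fin d)).card ≤ 4 := by
            refine le_trans (Finset.card_insert_le _ _) (Nat.succ_le_succ ?_)
            refine le_trans (Finset.card_insert_le _ _) (Nat.succ_le_succ ?_)
            refine le_trans (Finset.card_insert_le _ _) (Nat.succ_le_succ ?_)
            simp
          have e : (fun ω => s ω i * s ω k * (s ω i' * s ω k'))
              = fun ω => ∏ j ∈ ({i, k, i', k'} : Finset (Fin d)), s ω j := funext fun ω => by
            rw [Finset.prod_insert h1, Finset.prod_insert h2, Finset.prod_insert h3,
              Finset.prod_singleton]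
            ring
          rw [e]
          exact aux_sign_prod μ s hms hsign h4wise _ ⟨i, by simp⟩ hcard

end Aux4
section Aux5

variable {Ω : Type*} [MeasurableSpace Ω] (μ : Measure Ω) [IsProbabilityMeasure μ]
variable {d m : ℕ} (h : Ω → Fin d → Fin m) (s : Ω → Fin d → ℝ) (x y : Fin d → ℝ)

lemma aux_ind_meas (hmh : Measurable h) (i k : Fin d) :
    Measurable (fun ω => if h ω i = h ω k then (1:ℝ) else 0) := by
  classical
  exact Measurable.ite (aux_meas_E h hmh i k) measurable_const measurable_const

lemma aux_ind_int' (hmh : Measurable h) (i k : Fin d) :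
    Integrable (fun ω => if h ω i = h ω k then (1:ℝ) else 0) μ := by
  classical
  refine aux_int_of_bdd μ (aux_ind_meas h hmh i k) (C := 1) fun ω => ?_
  by_cases hc : h ω i = h ω k <;> simp [hc]

lemma aux_ET (hmh : Measurable h) (hms : Measurable s)
    (hsign : ∀ ω i, s ω i = 1 ∨ s ω i = -1)
    (h4wise : ∀ I : Finset (Fin d), I.card ≤ 4 → ∀ ε : Fin d → ℝ,
      (∀ i ∈ I, ε i = 1 ∨ ε i = -1) →
      μ {ω | ∀ i ∈ I, s ω i = ε i} = (1 / 2 : ℝ≥0∞) ^ I.card)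
    (hindep : IndepFun h s μ)
    (i k : Fin d) (hik : i ≠ k) :
    ∫ ω, auxT h s x y i k ω ∂μ = 0 := by
  classical
  have habs : ∀ ω j, |s ω j| = 1 := fun ω j => by
    rcases hsign ω j with h1 | h1 <;> rw [h1] <;> norm_num
  have e : (fun ω => auxT h s x y i k ω)
      = fun ω => (x i * y k) *
        ((if h ω i = h ω k then (1:ℝ) else 0) * (s ω i * s ω k)) := funext fun ω => by
    unfold auxT
    by_cases hc : h ω i = h ω k <;> simp [hc] <;> ring
  rw [e, integral_const_mul]
  have hXY : IndepFun
      ((fun g : Fin d → Fin m => if g i = g k then (1:ℝ) else 0) ∘ h)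
      ((fun v : Fin d → ℝ => v i * v k) ∘ s) μ :=
    hindep.comp (measurable_of_countable _) ((measurable_pi_apply i).mul (measurable_pi_apply k))
  have hXint : Integrable (fun ω => if h ω i = h ω k then (1:ℝ) else 0) μ :=
    aux_ind_int' μ h hmh i k
  have hYint : Integrable (fun ω => s ω i * s ω k) μ := by
    refine aux_int_of_bdd μ
      (((measurable_pi_apply i).comp hms).mul ((measurable_pi_apply k).comp hms)) (C := 1)
      fun ω => ?_
    rw [abs_mul, habs, habs]
    norm_num
  have hfact : ∫ ω, (if h ω i = h ω k then (1:ℝ) else 0) * (s ω i * s ω k) ∂μ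
      = (∫ ω, (if h ω i = h ω k then (1:ℝ) else 0) ∂μ) * ∫ ω, s ω i * s ω k ∂μ :=
    hXY.integral_mul_eq_mul_integral hXint.aestronglyMeasurable hYint.aestronglyMeasurable
  rw [hfact, aux_pair μ s hms hsign h4wise i k hik, mul_zero, mul_zero]

lemma aux_M (ω₀ : Ω) (hmh : Measurable h) (hms : Measurable s)
    (hsign : ∀ ω i, s ω i = 1 ∨ s ω i = -1)
    (h2wise : ∀ i j : Fin d, i ≠ j → ∀ a b : Fin m,
      μ {ω | h ω i = a ∧ h ω j = b} = 1 / (m : ℝ≥0∞) ^ 2)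
    (h4wise : ∀ I : Finset (Fin d), I.card ≤ 4 → ∀ ε : Fin d → ℝ,
      (∀ i ∈ I, ε i = 1 ∨ ε i = -1) →
      μ {ω | ∀ i ∈ I, s ω i = ε i} = (1 / 2 : ℝ≥0∞) ^ I.card)
    (hindep : IndepFun h s μ)
    (i k i' k' : Fin d) (hik : i ≠ k) (hik' : i' ≠ k') :
    ∫ ω, auxT h s x y i k ω * auxT h s x y i' k' ω ∂μ
      = if (i' = i ∧ k' = k) ∨ (i' = k ∧ k' = i)
          then x i * y k * (x i' * y k') / m else 0 := by
  classical
  have hss : ∀ ω j, s ω j * s ω j = 1 := fun ω j => by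
    rcases hsign ω j with h1 | h1 <;> rw [h1] <;> norm_num
  have habs : ∀ ω j, |s ω j| = 1 := fun ω j => by
    rcases hsign ω j with h1 | h1 <;> rw [h1] <;> norm_num
  by_cases hA : (i' = i ∧ k' = k) ∨ (i' = k ∧ k' = i)
  · rw [if_pos hA]
    rcases hA with ⟨e1, e2⟩ | ⟨e1, e2⟩
    · subst e1; subst e2
      have e : (fun ω => auxT h s x y i' k' ω * auxT h s x y i' k' ω)
          = fun ω => (x i' * y k' * (x i' * y k')) *
              (if h ω i' = h ω k' then (1:ℝ) else 0) := funext fun ω => by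
        unfold auxT
        by_cases hc : h ω i' = h ω k'
        · simp only [if_pos hc]
          linear_combination ((x i' * y k')^2 * (s ω i' * s ω i')) * hss ω k'
            + ((x i' * y k')^2) * hss ω i'
        · simp [hc]
      rw [e, integral_const_mul, aux_ind_int μ h hmh i' k',
        aux_col μ h ω₀ h2wise hmh i' k' (fun ee => hik ee)]
      ring
    · subst e1; subst e2
      -- (i', k') = (k, i) : goal about T i k * T k i with i = k', k = i'
      have e : (fun ω => auxT h s x y k' i' ω * auxT h s x y i' k' ω)
          = fun ω => (x k' * y i' * (x i' * y k')) *
              (if h ω k' = h ω i' then (1:ℝ) else 0) := funext fun ω => by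
        unfold auxT
        by_cases hc : h ω k' = h ω i'
        · simp only [if_pos hc, if_pos hc.symm]
          linear_combination ((x k' * y i') * (x i' * y k') * (s ω k' * s ω k')) * hss ω i'
            + ((x k' * y i') * (x i' * y k')) * hss ω k'
        · have hc' : ¬ h ω i' = h ω k' := fun ee => hc ee.symm
          simp [hc, hc']
      rw [e, integral_const_mul, aux_ind_int μ h hmh k' i',
        aux_col μ h ω₀ h2wise hmh k' i' hik]
      ring
  · rw [if_neg hA]
    have e : (fun ω => auxT h s x y i k ω * auxT h s x y i' k' ω)
        = fun ω => (x i * y k * (x i' * y k')) *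
            (((if h ω i = h ω k then (1:ℝ) else 0) * (if h ω i' = h ω k' then (1:ℝ) else 0)) *
             (s ω i * s ω k * (s ω i' * s ω k'))) := funext fun ω => by
      unfold auxT
      by_cases h1 : h ω i = h ω k <;> by_cases h2 : h ω i' = h ω k' <;>
        simp [h1, h2] <;> ring
    rw [e, integral_const_mul]
    have hXY : IndepFun
        ((fun g : Fin d → Fin m =>
          (if g i = g k then (1:ℝ) else 0) * (if g i' = g k' then (1:ℝ) else 0)) ∘ h)
        ((fun v : Fin d → ℝ => v i * v k * (v i' * v k')) ∘ s) μ :=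
      hindep.comp (measurable_of_countable _)
        ((((measurable_pi_apply i).mul (measurable_pi_apply k)).mul
          ((measurable_pi_apply i').mul (measurable_pi_apply k'))))
    have hXint : Integrable (fun ω =>
        (if h ω i = h ω k then (1:ℝ) else 0) * (if h ω i' = h ω k' then (1:ℝ) else 0)) μ := by
      refine aux_int_of_bdd μ ((aux_ind_meas h hmh i k).mul (aux_ind_meas h hmh i' k'))
        (C := 1) fun ω => ?_
      by_cases h1 : h ω i = h ω k <;> by_cases h2 : h ω i' = h ω k' <;> simp [h1, h2]
    have hYint : Integrable (fun ω => s ω i * s ω k * (s ω i' * s ω k')) μ := by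
      refine aux_int_of_bdd μ
        ((((measurable_pi_apply i).comp hms).mul ((measurable_pi_apply k).comp hms)).mul
          (((measurable_pi_apply i').comp hms).mul ((measurable_pi_apply k').comp hms)))
        (C := 1) fun ω => ?_
      rw [abs_mul, abs_mul, abs_mul, habs, habs, habs, habs]
      norm_num
    have hfact : ∫ ω,
        ((if h ω i = h ω k then (1:ℝ) else 0) * (if h ω i' = h ω k' then (1:ℝ) else 0)) *
          (s ω i * s ω k * (s ω i' * s ω k')) ∂μ
        = (∫ ω, (if h ω i = h ω k then (1:ℝ) else 0) *
              (if h ω i' = h ω k' then (1:ℝ) else 0) ∂μ) *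
          ∫ ω, s ω i * s ω k * (s ω i' * s ω k') ∂μ :=
      hXY.integral_mul_eq_mul_integral hXint.aestronglyMeasurable hYint.aestronglyMeasurable
    rw [hfact, aux_s4 μ s hms hsign h4wise i k i' k' hik hik' hA, mul_zero, mul_zero]

end Aux5
section Aux6

variable {Ω : Type*} [MeasurableSpace Ω] (μ : Measure Ω) [IsProbabilityMeasure μ]
variable {d m : ℕ} (h : Ω → Fin d → Fin m) (s : Ω → Fin d → ℝ) (x y : Fin d → ℝ)

lemma aux_var (c0 : ℝ) {W : Ω → ℝ} (hW : Measurable W) {B : ℝ} (hbd : ∀ ω, |W ω| ≤ B)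
    (hEW : ∫ ω, W ω ∂μ = 0) :
    variance (fun ω => c0 + W ω) μ = ∫ ω, W ω * W ω ∂μ := by
  have hWint : Integrable W μ := aux_int_of_bdd μ hW hbd
  have hW2int : Integrable (fun ω => W ω * W ω) μ :=
    aux_int_of_bdd μ (hW.mul hW) (C := B * B) (fun ω => by
      rw [abs_mul]
      exact mul_le_mul (hbd ω) (hbd ω) (abs_nonneg _) ((abs_nonneg _).trans (hbd ω)))
  have hmem : MemLp (fun ω => c0 + W ω) 2 μ :=
    MemLp.of_bound (measurable_const.add hW).aestronglyMeasurable (|c0| + B)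
      (ae_of_all _ fun ω => by
        rw [Real.norm_eq_abs]
        exact (abs_add_le _ _).trans (add_le_add le_rfl (hbd ω)))
  rw [variance_eq_sub hmem]
  rw [show μ[(fun ω => c0 + W ω) ^ 2]
      = ∫ ω, (c0 ^ 2 + (2 * c0) * W ω + W ω * W ω) ∂μ from
    integral_congr_ae (ae_of_all _ fun ω => by simp only [Pi.pow_apply]; ring)]
  have hint2 : Integrable (fun ω => (2 * c0) * W ω) μ := hWint.const_mul _
  have hint1 : Integrable (fun ω => c0 ^ 2 + (2 * c0) * W ω) μ :=
    (integrable_const _).add hint2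
  rw [integral_add hint1 hW2int, integral_add (integrable_const _) hint2,
    integral_const, integral_const_mul, hEW,
    integral_add (integrable_const c0) hWint, integral_const, hEW]
  simp [measure_univ]

lemma aux_key2 (c : Fin d → Fin d → ℝ) (i k : Fin d) (hik : i ≠ k) :
    ∑ i' : Fin d, ∑ k' ∈ Finset.univ.erase i',
        (if (i' = i ∧ k' = k) ∨ (i' = k ∧ k' = i) then c i' k' else 0)
      = c i k + c k i := by
  classical
  have hsplit : ∀ i' k' : Fin d,
      (if (i' = i ∧ k' = k) ∨ (i' = k ∧ k' = i) then c i' k' else 0)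
      = (if i' = i ∧ k' = k then c i' k' else 0) + (if i' = k ∧ k' = i then c i' k' else 0) := by
    intro i' k'
    by_cases hA : i' = i ∧ k' = k <;> by_cases hB : i' = k ∧ k' = i
    · exact absurd (hA.1.symm.trans hB.1) hik
    · rcases hA with ⟨rfl, rfl⟩
      simp [hB]
    · rcases hB with ⟨rfl, rfl⟩
      simp [hA]
    · simp [hA, hB]
  simp_rw [hsplit, Finset.sum_add_distrib]
  congr 1
  · rw [Finset.sum_eq_single i]
    · simp only [true_and, ite_and]
      rw [Finset.sum_ite_eq' (Finset.univ.erase i) k fun k' => c i k']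
      simp [Finset.mem_erase, Ne.symm hik]
    · intro i'' _ hne
      apply Finset.sum_eq_zero
      intro k' _
      simp [hne]
    · simp
  · rw [Finset.sum_eq_single k]
    · simp only [true_and, ite_and]
      rw [Finset.sum_ite_eq' (Finset.univ.erase k) i fun k' => c k k']
      simp [Finset.mem_erase, hik]
    · intro i'' _ hne
      apply Finset.sum_eq_zero
      intro k' _
      simp [hne]
    · simp

end Aux6
/-- CountSketch variance: with `h` 2-wise independent, `s` 4-wise independent uniform
signs, `h` independent of `s`, and `CS(x)_j = Σ_{i : h(i)=j} s(i) x_i`, for any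
`x, y ∈ ℝ^d`:
`Var(⟨CS(x), CS(y)⟩) = (1/m)(Σ_{i≠j} x_i² y_j² + Σ_{i≠j} x_i y_i x_j y_j)
                     ≤ (2/m) ‖x‖₂² ‖y‖₂²`. -/
theorem stmt2 {Ω : Type*} [MeasurableSpace Ω] (μ : Measure Ω) [IsProbabilityMeasure μ]
    (d m : ℕ)
    (h : Ω → Fin d → Fin m) (s : Ω → Fin d → ℝ)
    (hmh : Measurable h) (hms : Measurable s)
    (hsign : ∀ ω i, s ω i = 1 ∨ s ω i = -1)
    (h2wise : ∀ i j : Fin d, i ≠ j → ∀ a b : Fin m,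
      μ {ω | h ω i = a ∧ h ω j = b} = 1 / (m : ℝ≥0∞) ^ 2)
    (h4wise : ∀ I : Finset (Fin d), I.card ≤ 4 → ∀ ε : Fin d → ℝ,
      (∀ i ∈ I, ε i = 1 ∨ ε i = -1) →
      μ {ω | ∀ i ∈ I, s ω i = ε i} = (1 / 2 : ℝ≥0∞) ^ I.card)
    (hindep : IndepFun h s μ)
    (x y : Fin d → ℝ) :
    variance (fun ω => ∑ j : Fin m,
        (∑ i ∈ Finset.univ.filter fun i => h ω i = j, s ω i * x i) *
        (∑ i ∈ Finset.univ.filter fun i => h ω i = j, s ω i * y i)) μ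
      = (1 / m) * ((∑ i : Fin d, ∑ j ∈ Finset.univ.erase i, x i ^ 2 * y j ^ 2)
          + ∑ i : Fin d, ∑ j ∈ Finset.univ.erase i, x i * y i * x j * y j) ∧
    variance (fun ω => ∑ j : Fin m,
        (∑ i ∈ Finset.univ.filter fun i => h ω i = j, s ω i * x i) *
        (∑ i ∈ Finset.univ.filter fun i => h ω i = j, s ω i * y i)) μ
      ≤ (2 / m) * (∑ i, x i ^ 2) * (∑ i, y i ^ 2) := by
  classical
  have hΩ : Nonempty Ω := by
    by_contra hΩe
    rw [not_nonempty_iff] at hΩe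
    have h1 : μ Set.univ = 1 := measure_univ
    rw [Set.univ_eq_empty_iff.mpr hΩe, measure_empty] at h1
    exact zero_ne_one h1
  obtain ⟨ω₀⟩ := hΩ
  have hss : ∀ ω i, s ω i * s ω i = 1 := fun ω i => by
    rcases hsign ω i with h1 | h1 <;> rw [h1] <;> norm_num
  have habs : ∀ ω j, |s ω j| = 1 := fun ω j => by
    rcases hsign ω j with h1 | h1 <;> rw [h1] <;> norm_num
  have hfun : (fun ω => ∑ j : Fin m,
        (∑ i ∈ Finset.univ.filter fun i => h ω i = j, s ω i * x i) *
        (∑ i ∈ Finset.univ.filter fun i => h ω i = j, s ω i * y i))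
      = fun ω => (∑ i : Fin d, x i * y i) + auxW h s x y ω :=
    funext fun ω => aux_Z_eq h s x y hss ω
  rw [hfun]
  -- basic properties of the elementary terms
  have hmT : ∀ i k : Fin d, Measurable (auxT h s x y i k) := by
    intro i k
    unfold auxT
    exact Measurable.ite (aux_meas_E h hmh i k)
      ((((measurable_pi_apply i).comp hms).mul ((measurable_pi_apply k).comp hms)).mul_const _)
      measurable_const
  have hbT : ∀ (i k : Fin d) (ω : Ω), |auxT h s x y i k ω| ≤ |x i * y k| := by
    intro i k ω
    unfold auxT
    by_cases hc : h ω i = h ω k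
    · rw [if_pos hc, abs_mul, abs_mul, habs, habs, one_mul, one_mul]
    · rw [if_neg hc, abs_zero]
      exact abs_nonneg _
  have hTint : ∀ i k : Fin d, Integrable (auxT h s x y i k) μ :=
    fun i k => aux_int_of_bdd μ (hmT i k) (hbT i k)
  have hWmeas : Measurable (auxW h s x y) := by
    unfold auxW
    exact Finset.measurable_sum _ fun i _ => Finset.measurable_sum _ fun k _ => hmT i k
  have hWbd : ∀ ω, |auxW h s x y ω|
      ≤ ∑ i : Fin d, ∑ k ∈ Finset.univ.erase i, |x i * y k| := by
    intro ω
    refine (Finset.abs_sum_le_sum_abs _ _).trans ?_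
    refine Finset.sum_le_sum fun i _ => ?_
    refine (Finset.abs_sum_le_sum_abs _ _).trans ?_
    exact Finset.sum_le_sum fun k _ => hbT i k ω
  have hEW : ∫ ω, auxW h s x y ω ∂μ = 0 := by
    unfold auxW
    rw [integral_finset_sum _ fun i _ => integrable_finset_sum _ fun k _ => hTint i k]
    refine Finset.sum_eq_zero fun i _ => ?_
    rw [integral_finset_sum _ fun k _ => hTint i k]
    refine Finset.sum_eq_zero fun k hk => ?_
    exact aux_ET μ h s x y hmh hms hsign h4wise hindep i k
      (fun e => (Finset.ne_of_mem_erase hk) e.symm)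
  have hTT : ∀ i k i' k' : Fin d,
      Integrable (fun ω => auxT h s x y i k ω * auxT h s x y i' k' ω) μ := by
    intro i k i' k'
    refine aux_int_of_bdd μ ((hmT i k).mul (hmT i' k'))
      (C := |x i * y k| * |x i' * y k'|) fun ω => ?_
    rw [abs_mul]
    exact mul_le_mul (hbT i k ω) (hbT i' k' ω) (abs_nonneg _) (abs_nonneg _)
  have hWsq : ∀ ω, auxW h s x y ω * auxW h s x y ω
      = ∑ i : Fin d, ∑ i' : Fin d, ∑ k ∈ Finset.univ.erase i, ∑ k' ∈ Finset.univ.erase i',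
          auxT h s x y i k ω * auxT h s x y i' k' ω := by
    intro ω
    unfold auxW
    rw [Finset.sum_mul_sum]
    exact Finset.sum_congr rfl fun i _ => Finset.sum_congr rfl fun i' _ =>
      Finset.sum_mul_sum _ _ _ _
  have hEW2 : ∫ ω, auxW h s x y ω * auxW h s x y ω ∂μ
      = ∑ i : Fin d, ∑ k ∈ Finset.univ.erase i,
          (x i * y k * (x i * y k) / m + x i * y k * (x k * y i) / m) := by
    rw [integral_congr_ae (ae_of_all _ hWsq)]
    rw [integral_finset_sum _ fun i _ =>
      integrable_finset_sum _ fun i' _ =>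
        integrable_finset_sum _ fun k _ =>
          integrable_finset_sum _ fun k' _ => hTT i k i' k']
    refine Finset.sum_congr rfl fun i _ => ?_
    rw [integral_finset_sum _ fun i' _ =>
      integrable_finset_sum _ fun k _ => integrable_finset_sum _ fun k' _ => hTT i k i' k']
    have e1 : ∀ i' : Fin d, ∫ ω, (∑ k ∈ Finset.univ.erase i, ∑ k' ∈ Finset.univ.erase i',
        auxT h s x y i k ω * auxT h s x y i' k' ω) ∂μ
        = ∑ k ∈ Finset.univ.erase i, ∑ k' ∈ Finset.univ.erase i',
            ∫ ω, auxT h s x y i k ω * auxT h s x y i' k' ω ∂μ := by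
      intro i'
      rw [integral_finset_sum _ fun k _ => integrable_finset_sum _ fun k' _ => hTT i k i' k']
      exact Finset.sum_congr rfl fun k _ => integral_finset_sum _ fun k' _ => hTT i k i' k'
    rw [Finset.sum_congr rfl fun i' _ => e1 i']
    rw [Finset.sum_comm]
    refine Finset.sum_congr rfl fun k hk => ?_
    have hik : i ≠ k := fun e => (Finset.ne_of_mem_erase hk) e.symm
    rw [Finset.sum_congr rfl fun i' _ => Finset.sum_congr rfl fun k' hk' =>
      aux_M μ h s x y ω₀ hmh hms hsign h2wise h4wise hindep i k i' k' hik
        (fun e => (Finset.ne_of_mem_erase hk') e.symm)]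
    exact aux_key2 _ i k hik
  have hVar : variance (fun ω => (∑ i : Fin d, x i * y i) + auxW h s x y ω) μ
      = (1 / m) * ((∑ i : Fin d, ∑ j ∈ Finset.univ.erase i, x i ^ 2 * y j ^ 2)
          + ∑ i : Fin d, ∑ j ∈ Finset.univ.erase i, x i * y i * x j * y j) := by
    rw [aux_var μ _ hWmeas hWbd hEW, hEW2]
    calc ∑ i : Fin d, ∑ k ∈ Finset.univ.erase i,
          (x i * y k * (x i * y k) / m + x i * y k * (x k * y i) / m)
        = ∑ i : Fin d, ∑ k ∈ Finset.univ.erase i,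
            ((1 / (m:ℝ)) * (x i ^ 2 * y k ^ 2) + (1 / (m:ℝ)) * (x i * y i * x k * y k)) :=
          Finset.sum_congr rfl fun i _ => Finset.sum_congr rfl fun k _ => by ring
      _ = (1 / m) * ((∑ i : Fin d, ∑ j ∈ Finset.univ.erase i, x i ^ 2 * y j ^ 2)
          + ∑ i : Fin d, ∑ j ∈ Finset.univ.erase i, x i * y i * x j * y j) := by
          simp_rw [Finset.sum_add_distrib, ← Finset.mul_sum, ← mul_add]
  refine ⟨hVar, ?_⟩
  rw [hVar]
  have hS1 : (∑ i : Fin d, ∑ j ∈ Finset.univ.erase i, x i ^ 2 * y j ^ 2)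
      ≤ (∑ i : Fin d, x i ^ 2) * (∑ i : Fin d, y i ^ 2) := by
    calc (∑ i : Fin d, ∑ j ∈ Finset.univ.erase i, x i ^ 2 * y j ^ 2)
        ≤ ∑ i : Fin d, ∑ j : Fin d, x i ^ 2 * y j ^ 2 :=
          Finset.sum_le_sum fun i _ =>
            Finset.sum_le_sum_of_subset_of_nonneg (Finset.erase_subset _ _)
              (fun j _ _ => by positivity)
      _ = (∑ i : Fin d, x i ^ 2) * (∑ i : Fin d, y i ^ 2) :=
          (Finset.sum_mul_sum _ _ _ _).symm
  have hCS : (∑ i : Fin d, x i * y i) ^ 2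
      ≤ (∑ i : Fin d, x i ^ 2) * (∑ i : Fin d, y i ^ 2) :=
    Finset.sum_mul_sq_le_sq_mul_sq _ _ _
  have hS2 : (∑ i : Fin d, ∑ j ∈ Finset.univ.erase i, x i * y i * x j * y j)
      ≤ (∑ i : Fin d, x i ^ 2) * (∑ i : Fin d, y i ^ 2) := by
    have e : ∑ i : Fin d, ∑ j ∈ Finset.univ.erase i, x i * y i * x j * y j
        = (∑ i : Fin d, x i * y i) ^ 2 - ∑ i : Fin d, (x i * y i) ^ 2 := by
      calc ∑ i : Fin d, ∑ j ∈ Finset.univ.erase i, x i * y i * x j * y j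
          = ∑ i : Fin d, ((∑ j : Fin d, (x i * y i) * (x j * y j)) - (x i * y i) ^ 2) := by
            refine Finset.sum_congr rfl fun i _ => ?_
            rw [Finset.sum_erase_eq_sub (Finset.mem_univ i)]
            congr 1
            · exact Finset.sum_congr rfl fun j _ => by ring
            · ring
        _ = (∑ i : Fin d, x i * y i) ^ 2 - ∑ i : Fin d, (x i * y i) ^ 2 := by
            rw [Finset.sum_sub_distrib, sq, Finset.sum_mul_sum]
    rw [e]
    exact le_trans (sub_le_self _ (Finset.sum_nonneg fun i _ => sq_nonneg _)) hCS
  have hmnn : (0:ℝ) ≤ 1 / (m:ℝ) := by positivity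
  calc (1 / (m:ℝ)) * ((∑ i : Fin d, ∑ j ∈ Finset.univ.erase i, x i ^ 2 * y j ^ 2)
          + ∑ i : Fin d, ∑ j ∈ Finset.univ.erase i, x i * y i * x j * y j)
      ≤ (1 / (m:ℝ)) * ((∑ i : Fin d, x i ^ 2) * (∑ i : Fin d, y i ^ 2)
          + (∑ i : Fin d, x i ^ 2) * (∑ i : Fin d, y i ^ 2)) :=
        mul_le_mul_of_nonneg_left (add_le_add hS1 hS2) hmnn
    _ = (2 / m) * (∑ i : Fin d, x i ^ 2) * (∑ i : Fin d, y i ^ 2) := by ring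
end

section
/- Let h1 : [d] → [m], h2 : [d'] → [m] be independent 2-wise independent hashes, s1 : [d] → {±1}, s2 : [d'] → {±1} independent 4-wise independent sign hashes. Set H(i,j) = h1(i) + h2(j) mod m and S(i,j) = s1(i) s2(j), and let T be the induced TensorSketch operator on matrices. Then for any X, Y ∈ ℝ^{d×d'}, E[⟨T(X), T(Y)⟩] = ⟨X, Y⟩, the Frobenius inner product. -/
open MeasureTheory ProbabilityTheory Finset Matrix
open scoped ENNReal

lemma mean_zero_of_pm_one {Ω : Type*} [MeasurableSpace Ω] (μ : Measure Ω)
    [IsProbabilityMeasure μ] (f : Ω → ℝ) (hf : Measurable f)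
    (hpm : ∀ ω, f ω = 1 ∨ f ω = -1) (hA : μ {ω | f ω = 1} = 1 / 2) :
    ∫ ω, f ω ∂μ = 0 := by
  have hAm : MeasurableSet {ω | f ω = 1} := hf (measurableSet_singleton 1)
  have hfe : ∀ ω, f ω = 2 * Set.indicator {ω | f ω = 1} (fun _ => (1 : ℝ)) ω - 1 := by
    intro ω
    by_cases h : f ω = 1
    · rw [Set.indicator_of_mem (by exact h), h]; norm_num
    · rcases hpm ω with h' | h'
      · exact absurd h' h
      · rw [Set.indicator_of_notMem (by simpa [Set.mem_setOf_eq] using h), h']; ring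
  have hInd : Integrable (Set.indicator {ω | f ω = 1} (fun _ => (1 : ℝ))) μ :=
    (integrable_const (1 : ℝ)).indicator hAm
  rw [integral_congr_ae (ae_of_all _ hfe), integral_sub (hInd.const_mul 2) (integrable_const 1),
    integral_const_mul, integral_indicator_const _ hAm, integral_const, measureReal_def, hA]
  simp [ENNReal.toReal_div]

lemma pair_mean_zero {Ω : Type*} [MeasurableSpace Ω] (μ : Measure Ω)
    [IsProbabilityMeasure μ] (f g : Ω → ℝ) (hf : Measurable f) (hg : Measurable g)
    (hpmf : ∀ ω, f ω = 1 ∨ f ω = -1) (hpmg : ∀ ω, g ω = 1 ∨ g ω = -1)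
    (h11 : μ {ω | f ω = 1 ∧ g ω = 1} = (1 / 2 : ℝ≥0∞) ^ 2)
    (hmm : μ {ω | f ω = -1 ∧ g ω = -1} = (1 / 2 : ℝ≥0∞) ^ 2) :
    ∫ ω, f ω * g ω ∂μ = 0 := by
  apply mean_zero_of_pm_one μ _ (hf.mul hg)
  · intro ω
    rcases hpmf ω with h | h <;> rcases hpmg ω with h' | h' <;> simp [h, h']
  · have hset : {ω | f ω * g ω = 1} =
        {ω | f ω = 1 ∧ g ω = 1} ∪ {ω | f ω = -1 ∧ g ω = -1} := by
      ext ω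
      rcases hpmf ω with h | h <;> rcases hpmg ω with h' | h' <;>
        simp [h, h'] <;> norm_num
    have hdisj : Disjoint {ω | f ω = 1 ∧ g ω = 1} {ω | f ω = -1 ∧ g ω = -1} := by
      rw [Set.disjoint_left]
      rintro ω ⟨h1, -⟩ ⟨h2, -⟩
      rw [h1] at h2; norm_num at h2
    have hm2 : MeasurableSet {ω | f ω = -1 ∧ g ω = -1} := by
      have : {ω | f ω = -1 ∧ g ω = -1} = f ⁻¹' {-1} ∩ g ⁻¹' {-1} := by ext ω; simp
      rw [this]
      exact (hf (measurableSet_singleton _)).inter (hg (measurableSet_singleton _))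
    show μ {ω | f ω * g ω = 1} = 1 / 2
    rw [hset, measure_union hdisj hm2, h11, hmm]
    have : ((1 : ℝ≥0∞) / 2) ^ 2 + (1 / 2) ^ 2 = 2 * ((1 / 2) * (1 / 2)) := by ring
    rw [this, ← mul_assoc]
    rw [show (2 : ℝ≥0∞) * (1 / 2) = 1 by
      rw [one_div, ENNReal.mul_inv_cancel (by norm_num) (by norm_num)]]
    rw [one_mul]

/-- TensorSketch unbiasedness: with `h1, h2` 2-wise independent hashes into `[m]`,
`s1, s2` 4-wise independent uniform signs, all mutually independent,
`H(i,j) = h1(i) + h2(j) mod m`, `S(i,j) = s1(i) s2(j)`, and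
`T(A)_α = Σ_{i,j} 1[H(i,j)=α] S(i,j) A_{ij}`, for any `X, Y ∈ ℝ^{d×d'}`:
`E[⟨T(X), T(Y)⟩] = ⟨X, Y⟩` (Frobenius inner product). -/
theorem stmt4 {Ω : Type*} [MeasurableSpace Ω] (μ : Measure Ω) [IsProbabilityMeasure μ]
    (d d' m : ℕ)
    (h1 : Ω → Fin d → Fin m) (h2 : Ω → Fin d' → Fin m)
    (s1 : Ω → Fin d → ℝ) (s2 : Ω → Fin d' → ℝ)
    (hmh1 : Measurable h1) (hmh2 : Measurable h2)
    (hms1 : Measurable s1) (hms2 : Measurable s2)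
    (hsign1 : ∀ ω i, s1 ω i = 1 ∨ s1 ω i = -1)
    (hsign2 : ∀ ω j, s2 ω j = 1 ∨ s2 ω j = -1)
    (h1twowise : ∀ i j : Fin d, i ≠ j → ∀ a b : Fin m,
      μ {ω | h1 ω i = a ∧ h1 ω j = b} = 1 / (m : ℝ≥0∞) ^ 2)
    (h2twowise : ∀ i j : Fin d', i ≠ j → ∀ a b : Fin m,
      μ {ω | h2 ω i = a ∧ h2 ω j = b} = 1 / (m : ℝ≥0∞) ^ 2)
    (s1fourwise : ∀ I : Finset (Fin d), I.card ≤ 4 → ∀ ε : Fin d → ℝ,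
      (∀ i ∈ I, ε i = 1 ∨ ε i = -1) →
      μ {ω | ∀ i ∈ I, s1 ω i = ε i} = (1 / 2 : ℝ≥0∞) ^ I.card)
    (s2fourwise : ∀ I : Finset (Fin d'), I.card ≤ 4 → ∀ ε : Fin d' → ℝ,
      (∀ j ∈ I, ε j = 1 ∨ ε j = -1) →
      μ {ω | ∀ j ∈ I, s2 ω j = ε j} = (1 / 2 : ℝ≥0∞) ^ I.card)
    (hindep_h : IndepFun h1 h2 μ) (hindep_s : IndepFun s1 s2 μ)
    (hindep_hs : IndepFun (fun ω => (h1 ω, h2 ω)) (fun ω => (s1 ω, s2 ω)) μ)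
    (X Y : Matrix (Fin d) (Fin d') ℝ) :
    ∫ ω, (∑ α : Fin m,
        (∑ i, ∑ j, (if h1 ω i + h2 ω j = α then (1 : ℝ) else 0) *
            (s1 ω i * s2 ω j) * X i j) *
        (∑ i, ∑ j, (if h1 ω i + h2 ω j = α then (1 : ℝ) else 0) *
            (s1 ω i * s2 ω j) * Y i j)) ∂μ
      = ∑ i, ∑ j, X i j * Y i j := by
  classical
  -- the basic term
  set T : Fin d → Fin d' → Fin d → Fin d' → Ω → ℝ := fun i j i' j' ω =>
    (if h1 ω i + h2 ω j = h1 ω i' + h2 ω j' then (1 : ℝ) else 0) *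
      ((s1 ω i * s1 ω i') * (s2 ω j * s2 ω j')) * (X i j * Y i' j') with hT
  -- measurability helpers
  have me1 : ∀ i, Measurable fun ω => s1 ω i := fun i => (measurable_pi_apply i).comp hms1
  have me2 : ∀ j, Measurable fun ω => s2 ω j := fun j => (measurable_pi_apply j).comp hms2
  have meInd : ∀ (i : Fin d) (j : Fin d') (i' : Fin d) (j' : Fin d'),
      Measurable fun ω => (if h1 ω i + h2 ω j = h1 ω i' + h2 ω j' then (1 : ℝ) else 0) := by
    intro i j i' j'
    have : (fun ω => (if h1 ω i + h2 ω j = h1 ω i' + h2 ω j' then (1 : ℝ) else 0)) =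
        (fun p : (Fin d → Fin m) × (Fin d' → Fin m) =>
          if p.1 i + p.2 j = p.1 i' + p.2 j' then (1 : ℝ) else 0) ∘ fun ω => (h1 ω, h2 ω) := rfl
    rw [this]
    exact (measurable_of_countable _).comp (hmh1.prodMk hmh2)
  have meT : ∀ i j i' j', Measurable (T i j i' j') := by
    intro i j i' j'
    exact ((meInd i j i' j').mul
      (((me1 i).mul (me1 i')).mul ((me2 j).mul (me2 j')))).mul measurable_const
  -- integrability
  have hInt : ∀ i j i' j', Integrable (T i j i' j') μ := by
    intro i j i' j'
    refine Integrable.mono' (integrable_const (|X i j * Y i' j'|))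
      (meT i j i' j').aestronglyMeasurable (ae_of_all _ fun ω => ?_)
    have hs : |(s1 ω i * s1 ω i') * (s2 ω j * s2 ω j')| = 1 := by
      rcases hsign1 ω i with h | h <;> rcases hsign1 ω i' with h' | h' <;>
        rcases hsign2 ω j with h'' | h'' <;> rcases hsign2 ω j' with h''' | h''' <;>
        simp [h, h', h'', h''']
    by_cases hc : h1 ω i + h2 ω j = h1 ω i' + h2 ω j'
    · rw [hT]
      simp only [if_pos hc, one_mul, Real.norm_eq_abs, abs_mul, hs]
      exact le_rfl
    · rw [hT]
      simp only [if_neg hc, zero_mul, norm_zero]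
      positivity
  -- sign-pair mean zero
  have key1 : ∀ i i' : Fin d, i ≠ i' → ∫ ω, s1 ω i * s1 ω i' ∂μ = 0 := by
    intro i i' hne
    have hcard : ({i, i'} : Finset (Fin d)).card = 2 := by
      rw [Finset.card_insert_of_notMem (by simpa using hne), Finset.card_singleton]
    have haux : ∀ a b : ℝ, (a = 1 ∨ a = -1) → (b = 1 ∨ b = -1) →
        μ {ω | s1 ω i = a ∧ s1 ω i' = b} = (1 / 2 : ℝ≥0∞) ^ 2 := by
      intro a b ha hb
      have := s1fourwise {i, i'} (by rw [hcard]; norm_num)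
        (fun k => if k = i then a else b) (by
          intro k hk
          by_cases h : k = i <;> simp [h, ha, hb])
      rw [hcard] at this
      rw [← this]
      congr 1
      ext ω
      simp only [Set.mem_setOf_eq, Finset.mem_insert, Finset.mem_singleton]
      constructor
      · rintro ⟨hA, hB⟩ k hk
        rcases hk with rfl | rfl
        · simp [hA]
        · simp [hne.symm, hB]
      · intro h
        refine ⟨?_, ?_⟩
        · simpa using h i (Or.inl rfl)
        · simpa [hne.symm] using h i' (Or.inr rfl)
    exact pair_mean_zero μ _ _ (me1 i) (me1 i') (fun ω => hsign1 ω i) (fun ω => hsign1 ω i')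
      (haux 1 1 (Or.inl rfl) (Or.inl rfl)) (haux (-1) (-1) (Or.inr rfl) (Or.inr rfl))
  have key2 : ∀ j j' : Fin d', j ≠ j' → ∫ ω, s2 ω j * s2 ω j' ∂μ = 0 := by
    intro j j' hne
    have hcard : ({j, j'} : Finset (Fin d')).card = 2 := by
      rw [Finset.card_insert_of_notMem (by simpa using hne), Finset.card_singleton]
    have haux : ∀ a b : ℝ, (a = 1 ∨ a = -1) → (b = 1 ∨ b = -1) →
        μ {ω | s2 ω j = a ∧ s2 ω j' = b} = (1 / 2 : ℝ≥0∞) ^ 2 := by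
      intro a b ha hb
      have := s2fourwise {j, j'} (by rw [hcard]; norm_num)
        (fun k => if k = j then a else b) (by
          intro k hk
          by_cases h : k = j <;> simp [h, ha, hb])
      rw [hcard] at this
      rw [← this]
      congr 1
      ext ω
      simp only [Set.mem_setOf_eq, Finset.mem_insert, Finset.mem_singleton]
      constructor
      · rintro ⟨hA, hB⟩ k hk
        rcases hk with rfl | rfl
        · simp [hA]
        · simp [hne.symm, hB]
      · intro h
        refine ⟨?_, ?_⟩
        · simpa using h j (Or.inl rfl)
        · simpa [hne.symm] using h j' (Or.inr rfl)
    exact pair_mean_zero μ _ _ (me2 j) (me2 j') (fun ω => hsign2 ω j) (fun ω => hsign2 ω j')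
      (haux 1 1 (Or.inl rfl) (Or.inl rfl)) (haux (-1) (-1) (Or.inr rfl) (Or.inr rfl))
  -- the value of each basic integral
  have hval : ∀ i j i' j', ∫ ω, T i j i' j' ω ∂μ =
      if i = i' ∧ j = j' then X i j * Y i j else 0 := by
    intro i j i' j'
    by_cases hd : i = i' ∧ j = j'
    · obtain ⟨rfl, rfl⟩ := hd
      have hpt : ∀ ω, T i j i j ω = X i j * Y i j := by
        intro ω
        rcases hsign1 ω i with h | h <;> rcases hsign2 ω j with h' | h' <;>
          simp [hT, h, h']
      rw [integral_congr_ae (ae_of_all _ hpt), integral_const]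
      simp
    · -- off-diagonal: expectation vanishes by sign independence
      rw [if_neg hd]
      have hTsplit : ∀ ω, T i j i' j' ω =
          (((fun p : (Fin d → Fin m) × (Fin d' → Fin m) =>
              if p.1 i + p.2 j = p.1 i' + p.2 j' then (1 : ℝ) else 0) ∘
              fun ω => (h1 ω, h2 ω)) ω *
           ((fun p : (Fin d → ℝ) × (Fin d' → ℝ) =>
              (p.1 i * p.1 i') * (p.2 j * p.2 j')) ∘ fun ω => (s1 ω, s2 ω)) ω) *
          (X i j * Y i' j') := by
        intro ω; simp [hT]
      rw [integral_congr_ae (ae_of_all _ hTsplit), integral_mul_const]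
      have hφ : Measurable (fun p : (Fin d → Fin m) × (Fin d' → Fin m) =>
          if p.1 i + p.2 j = p.1 i' + p.2 j' then (1 : ℝ) else 0) := measurable_of_countable _
      have hψ : Measurable (fun p : (Fin d → ℝ) × (Fin d' → ℝ) =>
          (p.1 i * p.1 i') * (p.2 j * p.2 j')) := by
        exact (((measurable_pi_apply i).comp measurable_fst).mul
          ((measurable_pi_apply i').comp measurable_fst)).mul
          (((measurable_pi_apply j).comp measurable_snd).mul
          ((measurable_pi_apply j').comp measurable_snd))
      have hind := (hindep_hs.comp hφ hψ)
      have hmul := hind.integral_mul_eq_mul_integral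
        ((hφ.comp (hmh1.prodMk hmh2)).aestronglyMeasurable)
        ((hψ.comp (hms1.prodMk hms2)).aestronglyMeasurable)
      have hmul' : ∫ ω, ((fun p : (Fin d → Fin m) × (Fin d' → Fin m) =>
              if p.1 i + p.2 j = p.1 i' + p.2 j' then (1 : ℝ) else 0) ∘
              fun ω => (h1 ω, h2 ω)) ω *
            ((fun p : (Fin d → ℝ) × (Fin d' → ℝ) =>
              (p.1 i * p.1 i') * (p.2 j * p.2 j')) ∘ fun ω => (s1 ω, s2 ω)) ω ∂μ =
          (∫ ω, (if h1 ω i + h2 ω j = h1 ω i' + h2 ω j' then (1 : ℝ) else 0) ∂μ) *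
          ∫ ω, (s1 ω i * s1 ω i') * (s2 ω j * s2 ω j') ∂μ := hmul
      rw [hmul']
      -- the sign expectation is zero
      have hsigns : (∫ ω, (s1 ω i * s1 ω i') * (s2 ω j * s2 ω j') ∂μ) = 0 := by
        have hφ1 : Measurable (fun f : Fin d → ℝ => f i * f i') :=
          (measurable_pi_apply i).mul (measurable_pi_apply i')
        have hφ2 : Measurable (fun f : Fin d' → ℝ => f j * f j') :=
          (measurable_pi_apply j).mul (measurable_pi_apply j')
        have hind2 := hindep_s.comp hφ1 hφ2
        have hmul2 : ∫ ω, (s1 ω i * s1 ω i') * (s2 ω j * s2 ω j') ∂μ =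
            (∫ ω, s1 ω i * s1 ω i' ∂μ) * ∫ ω, s2 ω j * s2 ω j' ∂μ :=
          hind2.integral_mul_eq_mul_integral ((hφ1.comp hms1).aestronglyMeasurable)
            ((hφ2.comp hms2).aestronglyMeasurable)
        rw [hmul2]
        rcases not_and_or.mp hd with h | h
        · rw [key1 i i' h, zero_mul]
        · rw [key2 j j' h, mul_zero]
      rw [hsigns]; ring
  -- pointwise expansion of the integrand
  have hpt : ∀ ω, (∑ α : Fin m,
        (∑ i, ∑ j, (if h1 ω i + h2 ω j = α then (1 : ℝ) else 0) *
            (s1 ω i * s2 ω j) * X i j) *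
        (∑ i, ∑ j, (if h1 ω i + h2 ω j = α then (1 : ℝ) else 0) *
            (s1 ω i * s2 ω j) * Y i j)) =
      ∑ i, ∑ j, ∑ i', ∑ j', T i' j' i j ω := by
    intro ω
    simp only [Finset.sum_mul, Finset.mul_sum]
    rw [Finset.sum_comm]
    refine Finset.sum_congr rfl fun i _ => ?_
    rw [Finset.sum_comm]
    refine Finset.sum_congr rfl fun j _ => ?_
    rw [Finset.sum_comm]
    refine Finset.sum_congr rfl fun i' _ => ?_
    rw [Finset.sum_comm]
    refine Finset.sum_congr rfl fun j' _ => ?_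
    simp only [hT, ite_mul, mul_ite, zero_mul, mul_zero, one_mul]
    by_cases h : h1 ω i' + h2 ω j' = h1 ω i + h2 ω j
    · rw [if_pos h]
      rw [Finset.sum_eq_single (h1 ω i + h2 ω j)]
      · rw [if_pos rfl, if_pos h]; ring
      · intro b _ hb
        rw [if_neg (fun hc => hb hc.symm)]
      · intro hb
        exact absurd (Finset.mem_univ _) hb
    · rw [if_neg h]
      rw [Finset.sum_eq_zero]
      intro α _
      by_cases hα : h1 ω i + h2 ω j = α
      · rw [if_pos hα, if_neg (fun hc => h (hc.trans hα.symm))]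
      · rw [if_neg hα]
  rw [integral_congr_ae (ae_of_all _ hpt)]
  rw [integral_finset_sum _ fun i _ => integrable_finset_sum _ fun j _ =>
    integrable_finset_sum _ fun i' _ => integrable_finset_sum _ fun j' _ => hInt i' j' i j]
  refine Finset.sum_congr rfl fun i _ => ?_
  rw [integral_finset_sum _ fun j _ =>
    integrable_finset_sum _ fun i' _ => integrable_finset_sum _ fun j' _ => hInt i' j' i j]
  refine Finset.sum_congr rfl fun j _ => ?_
  rw [integral_finset_sum _ fun i' _ => integrable_finset_sum _ fun j' _ => hInt i' j' i j]
  calc ∑ i', ∫ ω, ∑ j', T i' j' i j ω ∂μ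
      = ∑ i', ∑ j', ∫ ω, T i' j' i j ω ∂μ := by
        refine Finset.sum_congr rfl fun i' _ => ?_
        exact integral_finset_sum _ fun j' _ => hInt i' j' i j
    _ = ∑ i', ∑ j', if i' = i ∧ j' = j then X i' j' * Y i' j' else 0 := by
        refine Finset.sum_congr rfl fun i' _ => Finset.sum_congr rfl fun j' _ => hval i' j' i j
    _ = X i j * Y i j := by
        simp [ite_and, Finset.sum_ite_eq', Finset.mem_univ]
end
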